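/- Let M be a number field and let v be a finite place of M lying above a prime number p, with ramification index e and residue degree f over p. Let β ∈ M be a nonzero element such that v(β) ≠ 0 and w(β) = 0 for every finite place w ≠ v of M. Then the degree [M : ℚ(β)] divides e·f. In particular, if e·f is coprime to [M : ℚ], then ℚ(β) = M. -/

import Mathlib

open NumberField IsDedekindDomain UniqueFactorizationMonoid
open scoped Classical Multiplicative

section Aux

variable {A : Type*} [CommRing A] [IsDedekindDomain A]

/-- The multiplicity of a height-one prime `v` in the factorization of the ideal `(x)`. -/
noncomputable def cntAux (v : HeightOneSpectrum A) (x : A) : ℕ :=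
  (Associates.mk v.asIdeal).count (Associates.mk (Ideal.span {x} : Ideal A)).factors

theorem intValuationDef_eq_cntAux (v : HeightOneSpectrum A) {x : A} (hx : x ≠ 0) :
    v.intValuationDef x = ↑(Multiplicative.ofAdd (-(cntAux v x : ℤ))) :=
  v.intValuationDef_if_neg hx

/-- Key step: if the factorizations of `(a)` and `(b)` agree away from `v` and the
multiplicity at `v` of `b` is smaller, then `a = γ * b` with `(γ) = v ^ m`. -/
theorem exists_span_eq_pow (v : HeightOneSpectrum A) {a b : A} (ha : a ≠ 0) (hb : b ≠ 0)
    (hne : ∀ w : HeightOneSpectrum A, w ≠ v → cntAux w a = cntAux w b)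
    (hlt : cntAux v b < cntAux v a) :
    ∃ γ : A, γ * b = a ∧ γ ≠ 0 ∧
      Ideal.span {γ} = v.asIdeal ^ (cntAux v a - cntAux v b) := by
  set m : ℕ := cntAux v a - cntAux v b with hm
  have hspa : (Ideal.span {a} : Ideal A) ≠ 0 := by
    simpa [Ideal.span_singleton_eq_bot] using ha
  have hspb : (Ideal.span {b} : Ideal A) ≠ 0 := by
    simpa [Ideal.span_singleton_eq_bot] using hb
  have hvne : (v.asIdeal : Ideal A) ≠ 0 := v.ne_bot
  have hpow : (v.asIdeal ^ m : Ideal A) ≠ 0 := pow_ne_zero _ hvne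
  have H : (Ideal.span {a} : Ideal A) = v.asIdeal ^ m * Ideal.span {b} := by
    have h1 : Associates.mk (Ideal.span {a} : Ideal A) =
        Associates.mk (v.asIdeal ^ m * Ideal.span {b}) := by
      apply Associates.eq_of_eq_counts
      · simpa using hspa
      · simpa using mul_ne_zero hpow hspb
      intro P hP
      obtain ⟨Q, rfl⟩ := Associates.mk_surjective P
      have hQirr : Irreducible Q := Associates.irreducible_mk.mp hP
      have hQprime : Prime Q := (UniqueFactorizationMonoid.irreducible_iff_prime).mp hQirr
      have hvirr : Irreducible (Associates.mk v.asIdeal) :=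
        Associates.irreducible_mk.mpr v.irreducible
      have hcmul : (Associates.mk Q).count
          (Associates.mk (v.asIdeal ^ m * Ideal.span {b})).factors = m *
            (Associates.mk Q).count (Associates.mk v.asIdeal).factors +
            (Associates.mk Q).count (Associates.mk (Ideal.span {b} : Ideal A)).factors := by
        rw [← Associates.mk_mul_mk]
        rw [Associates.count_mul (Associates.mk_ne_zero.mpr hpow)
          (Associates.mk_ne_zero.mpr hspb) hP]
        rw [Associates.mk_pow, Associates.count_pow (Associates.mk_ne_zero.mpr hvne) hP]
      by_cases hQv : Q = v.asIdeal
      · rw [hcmul, hQv, Associates.count_self hvirr]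
        show cntAux v a = m * 1 + cntAux v b
        omega
      · have hmkne : Associates.mk Q ≠ Associates.mk v.asIdeal := fun h =>
          hQv (associated_iff_eq.mp (Associates.mk_eq_mk_iff_associated.mp h))
        rw [hcmul, Associates.count_eq_zero_of_ne hP hvirr hmkne]
        set w : HeightOneSpectrum A :=
          ⟨Q, Ideal.isPrime_of_prime hQprime, hQprime.ne_zero⟩ with hw
        have hwv : w ≠ v := fun h => hQv (congrArg HeightOneSpectrum.asIdeal h)
        show cntAux w a = m * 0 + cntAux w b
        rw [hne w hwv]; ring
    rwa [Associates.mk_eq_mk_iff_associated, associated_iff_eq] at h1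
  have hle : (Ideal.span {a} : Ideal A) ≤ Ideal.span {b} := by
    rw [H]; exact Ideal.mul_le_right
  have hmem : a ∈ Ideal.span ({b} : Set A) :=
    hle (Ideal.mem_span_singleton_self a)
  obtain ⟨γ, hγ⟩ := Ideal.mem_span_singleton'.mp hmem
  refine ⟨γ, hγ, ?_, ?_⟩
  · rintro rfl; rw [zero_mul] at hγ; exact ha hγ.symm
  · have hsp : Ideal.span {γ} * Ideal.span {b} = v.asIdeal ^ m * Ideal.span {b} := by
      rw [Ideal.span_singleton_mul_span_singleton, hγ, H]
    exact mul_right_cancel₀ hspb hsp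

end Aux

section Main

variable {M : Type*} [Field M] [NumberField M]

theorem exists_gen_of_single_place (v : HeightOneSpectrum (𝓞 M)) (β : M) (hβ : β ≠ 0)
    (hvβ : v.valuation M β ≠ 1)
    (hwβ : ∀ w : HeightOneSpectrum (𝓞 M), w ≠ v → w.valuation M β = 1) :
    ∃ γ : 𝓞 M, (algebraMap (𝓞 M) M γ = β ∨ algebraMap (𝓞 M) M γ = β⁻¹) ∧ γ ≠ 0 ∧
      ∃ m : ℕ, 0 < m ∧ Ideal.span {γ} = v.asIdeal ^ m := by
  obtain ⟨a, b, hbnz, hab⟩ := IsFractionRing.div_surjective (A := 𝓞 M) β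
  have hb : b ≠ 0 := nonZeroDivisors.ne_zero hbnz
  have hbM : algebraMap (𝓞 M) M b ≠ 0 := by
    simpa using (RingOfIntegers.coe_ne_zero_iff).mpr hb
  have ha : a ≠ 0 := by
    rintro rfl
    rw [map_zero, zero_div] at hab
    exact hβ hab.symm
  have haM : algebraMap (𝓞 M) M a ≠ 0 := by
    simpa using (RingOfIntegers.coe_ne_zero_iff).mpr ha
  -- valuation computation
  have hval : ∀ w : HeightOneSpectrum (𝓞 M),
      w.valuation M β = ↑(Multiplicative.ofAdd ((cntAux w b : ℤ) - (cntAux w a : ℤ))) := by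
    intro w
    have h1 : w.valuation M β * w.valuation M (algebraMap (𝓞 M) M b) =
        w.valuation M (algebraMap (𝓞 M) M a) := by
      rw [← Valuation.map_mul, ← hab, div_mul_cancel₀ _ hbM]
    rw [HeightOneSpectrum.valuation_of_algebraMap, HeightOneSpectrum.valuation_of_algebraMap,
      HeightOneSpectrum.intValuation_apply, HeightOneSpectrum.intValuation_apply,
      intValuationDef_eq_cntAux w hb, intValuationDef_eq_cntAux w ha] at h1
    have hbne : (↑(Multiplicative.ofAdd (-(cntAux w b : ℤ))) : WithZero (Multiplicative ℤ)) ≠ 0 :=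
      WithZero.coe_ne_zero
    have h2 : (↑(Multiplicative.ofAdd ((cntAux w b : ℤ) - (cntAux w a : ℤ))) : WithZero (Multiplicative ℤ)) *
        ↑(Multiplicative.ofAdd (-(cntAux w b : ℤ))) =
        ↑(Multiplicative.ofAdd (-(cntAux w a : ℤ))) := by
      rw [← WithZero.coe_mul, ← ofAdd_add]
      congr 2
      ring
    exact mul_right_cancel₀ hbne (h1.trans h2.symm)
  have hcnt : ∀ w : HeightOneSpectrum (𝓞 M), w ≠ v → cntAux w a = cntAux w b := by
    intro w hw
    have := (hval w).symm.trans (hwβ w hw)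
    rw [← WithZero.coe_one, WithZero.coe_inj, ← ofAdd_zero] at this
    have := Multiplicative.ofAdd.injective this
    omega
  have hvne : cntAux v a ≠ cntAux v b := by
    intro h
    apply hvβ
    rw [hval v, h, sub_self, ofAdd_zero, WithZero.coe_one]
  rcases lt_or_gt_of_ne hvne with hlt | hlt
  · -- cntAux v a < cntAux v b : use β⁻¹ = a⁻¹ * b ... i.e. swap roles
    obtain ⟨γ, hγab, hγ0, hsp⟩ := exists_span_eq_pow v hb ha
      (fun w hw => (hcnt w hw).symm) hlt
    refine ⟨γ, Or.inr ?_, hγ0, ⟨_, by omega, hsp⟩⟩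
    have : (algebraMap (𝓞 M) M γ) * algebraMap (𝓞 M) M a = algebraMap (𝓞 M) M b := by
      rw [← map_mul, hγab]
    rw [← hab, inv_div, eq_div_iff haM]
    exact this
  · obtain ⟨γ, hγab, hγ0, hsp⟩ := exists_span_eq_pow v ha hb hcnt hlt
    refine ⟨γ, Or.inl ?_, hγ0, ⟨_, by omega, hsp⟩⟩
    have : (algebraMap (𝓞 M) M γ) * algebraMap (𝓞 M) M b = algebraMap (𝓞 M) M a := by
      rw [← map_mul, hγab]
    rw [← hab, eq_div_iff hbM]
    exact this

end Main

/-- Let `M` be a number field and `v` a finite place of `M` above a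
prime `p`, with ramification index `e` and residue degree `f` over `p`. Let `β ∈ M` be a
nonzero element such that `v(β) ≠ 0` and `w(β) = 0` for every finite place `w ≠ v`.
Then `[M : ℚ(β)]` divides `e * f`; in particular if `e * f` is coprime to `[M : ℚ]`,
then `ℚ(β) = M`. -/
theorem degree_dvd_of_single_place_valuation
    (M : Type*) [Field M] [NumberField M]
    (p : ℕ) (hp : p.Prime)
    (v : HeightOneSpectrum (𝓞 M)) (hv : (p : 𝓞 M) ∈ v.asIdeal)
    (e f : ℕ)
    (he : e = Ideal.ramificationIdx' (Ideal.span {(p : ℤ)}) v.asIdeal)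
    (hf : f = Ideal.inertiaDeg' (Ideal.span {(p : ℤ)}) v.asIdeal)
    (β : M) (hβ : β ≠ 0)
    (hvβ : v.valuation M β ≠ 1)
    (hwβ : ∀ w : HeightOneSpectrum (𝓞 M), w ≠ v → w.valuation M β = 1) :
    Module.finrank (IntermediateField.adjoin ℚ ({β} : Set M)) M ∣ e * f ∧
      (Nat.Coprime (e * f) (Module.finrank ℚ M) →
        IntermediateField.adjoin ℚ ({β} : Set M) = ⊤) := by
  classical
  obtain ⟨γ, hγβ, hγ0, m, hm0, hspan⟩ := exists_gen_of_single_place v β hβ hvβ hwβ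
  set K : IntermediateField ℚ M := IntermediateField.adjoin ℚ ({β} : Set M) with hK
  -- the element β (or β⁻¹) lies in K
  have hβK : β ∈ K := IntermediateField.mem_adjoin_simple_self ℚ β
  have hγK : algebraMap (𝓞 M) M γ ∈ K := by
    rcases hγβ with h | h
    · rw [h]; exact hβK
    · rw [h]; exact inv_mem hβK
  -- build the corresponding element of 𝓞 K
  have hint : IsIntegral ℤ (⟨algebraMap (𝓞 M) M γ, hγK⟩ : K) := by
    rw [← isIntegral_algebraMap_iff (algebraMap (↥K) M).injective]
    exact RingOfIntegers.isIntegral_coe γ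
  set γ' : 𝓞 K := ⟨⟨algebraMap (𝓞 M) M γ, hγK⟩, hint⟩ with hγ'
  have hγ'map : algebraMap (𝓞 K) (𝓞 M) γ' = γ := by
    apply RingOfIntegers.ext
    rfl
  have hγ'0 : γ' ≠ 0 := by
    intro h
    apply hγ0
    rw [← hγ'map, h, map_zero]
  -- the prime below v
  set u : Ideal (𝓞 K) := Ideal.comap (algebraMap (𝓞 K) (𝓞 M)) v.asIdeal with hu
  haveI hu_prime : u.IsPrime := Ideal.IsPrime.comap _
  have hγv : γ ∈ v.asIdeal := by
    have h1 : γ ∈ Ideal.span {γ} := Ideal.mem_span_singleton_self γ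
    rw [hspan] at h1
    exact Ideal.pow_le_self (by omega) h1
  have hγ'u : γ' ∈ u := by
    rw [hu, Ideal.mem_comap, hγ'map]; exact hγv
  have hu_ne_bot : u ≠ ⊥ := fun h => hγ'0 (by rwa [h, Ideal.mem_bot] at hγ'u)
  haveI hu_max : u.IsMaximal := Ring.DimensionLEOne.maximalOfPrime hu_ne_bot hu_prime
  have hmapne : Ideal.map (algebraMap (𝓞 K) (𝓞 M)) u ≠ ⊥ := by
    rw [Ne, Ideal.map_eq_bot_iff_of_injective (RingOfIntegers.algebraMap.injective K M)]
    exact hu_ne_bot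
  have hmaple : Ideal.map (algebraMap (𝓞 K) (𝓞 M)) u ≤ v.asIdeal := Ideal.map_comap_le
  -- the only prime above u is v
  have hfactors : (factors (Ideal.map (algebraMap (𝓞 K) (𝓞 M)) u)).toFinset =
      {v.asIdeal} := by
    ext P
    simp only [Multiset.mem_toFinset, Finset.mem_singleton]
    constructor
    · intro hP
      have hPprime : Prime P := prime_of_factor P hP
      have hPle : Ideal.map (algebraMap (𝓞 K) (𝓞 M)) u ≤ P :=
        Ideal.le_of_dvd (dvd_of_mem_factors hP)
      have hγP : γ ∈ P := by
        apply hPle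
        rw [← hγ'map]
        exact Ideal.mem_map_of_mem _ hγ'u
      have hdvd : P ∣ v.asIdeal ^ m := by
        rw [Ideal.dvd_iff_le, ← hspan, Ideal.span_le, Set.singleton_subset_iff]
        exact hγP
      have hdvd' : P ∣ v.asIdeal := hPprime.dvd_of_dvd_pow hdvd
      have hle' : v.asIdeal ≤ P := Ideal.le_of_dvd hdvd'
      have hPneTop : P ≠ ⊤ := fun h => hPprime.2.1 (Ideal.isUnit_iff.mpr h)
      exact (v.isMaximal.eq_of_le hPneTop hle').symm
    · rintro rfl
      have hdvd : v.asIdeal ∣ Ideal.map (algebraMap (𝓞 K) (𝓞 M)) u :=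
        Ideal.dvd_iff_le.mpr hmaple
      obtain ⟨q, hq, hassoc⟩ := exists_mem_factors_of_dvd hmapne v.irreducible hdvd
      rwa [associated_iff_eq.mp hassoc]
  -- fundamental identity over u
  haveI : Module.Finite (𝓞 K) (𝓞 M) := ⟨IsNoetherian.noetherian ⊤⟩
  have hsum := Ideal.sum_ramification_inertia (R := 𝓞 K) (𝓞 M) K M hu_ne_bot
  rw [IsDedekindDomain.primesOverFinset, hfactors, Finset.sum_singleton] at hsum
  set e₂ : ℕ := Ideal.ramificationIdx' u v.asIdeal with he₂
  set f₂ : ℕ := Ideal.inertiaDeg' u v.asIdeal with hf₂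
  -- tower relations
  have hinj : Function.Injective (algebraMap ℤ (𝓞 M)) :=
    RingHom.injective_int _
  have hmapZ : Ideal.map (algebraMap ℤ (𝓞 M)) (Ideal.span {(p : ℤ)}) ≠ ⊥ := by
    rw [Ne, Ideal.map_eq_bot_iff_of_injective hinj, Ideal.span_singleton_eq_bot]
    exact_mod_cast hp.ne_zero
  have hetower : e = Ideal.ramificationIdx' (Ideal.span {(p : ℤ)}) u * e₂ := by
    rw [he, he₂]
    exact Ideal.ramificationIdx'_algebra_tower hmapne hmapZ hmaple
  haveI hpmax : (Ideal.span {(p : ℤ)}).IsMaximal :=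
    PrincipalIdealRing.isMaximal_of_irreducible (Nat.prime_iff_prime_int.mp hp).irreducible
  have hcomapZ : Ideal.comap (algebraMap ℤ (𝓞 M)) v.asIdeal = Ideal.span {(p : ℤ)} := by
    have hne : Ideal.comap (algebraMap ℤ (𝓞 M)) v.asIdeal ≠ ⊤ :=
      Ideal.comap_ne_top _ v.isMaximal.ne_top
    have hle : Ideal.span {(p : ℤ)} ≤ Ideal.comap (algebraMap ℤ (𝓞 M)) v.asIdeal := by
      rw [Ideal.span_le, Set.singleton_subset_iff]
      show algebraMap ℤ (𝓞 M) (p : ℤ) ∈ v.asIdeal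
      have hcast : algebraMap ℤ (𝓞 M) ((p : ℕ) : ℤ) = ((p : ℕ) : 𝓞 M) := by
        simp
      rw [hcast]
      exact hv
    exact (hpmax.eq_of_le hne hle).symm
  haveI hlies1 : u.LiesOver (Ideal.span {(p : ℤ)}) := by
    constructor
    show Ideal.span {(p : ℤ)} = Ideal.comap (algebraMap ℤ (𝓞 K)) u
    rw [hu, Ideal.comap_comap, ← IsScalarTower.algebraMap_eq, hcomapZ]
  haveI hlies2 : v.asIdeal.LiesOver u := ⟨rfl⟩
  have hftower : f = Ideal.inertiaDeg' (Ideal.span {(p : ℤ)}) u * f₂ := by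
    rw [hf, hf₂]
    exact Ideal.inertiaDeg'_algebra_tower (Ideal.span {(p : ℤ)}) u v.asIdeal
  have hdvd : Module.finrank K M ∣ e * f := by
    rw [← hsum, hetower, hftower]
    exact mul_dvd_mul (dvd_mul_left _ _) (dvd_mul_left _ _)
  refine ⟨hdvd, fun hcop => ?_⟩
  have hmul : Module.finrank ℚ K * Module.finrank K M = Module.finrank ℚ M :=
    Module.finrank_mul_finrank ℚ K M
  have hdvd2 : Module.finrank K M ∣ Module.finrank ℚ M := ⟨Module.finrank ℚ K, by
    rw [← hmul]; ring⟩
  have h1 : Module.finrank K M = 1 :=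
    Nat.dvd_one.mp (hcop ▸ Nat.dvd_gcd hdvd hdvd2)
  have hfr : Module.finrank ℚ K = Module.finrank ℚ M := by
    rw [← hmul, h1, mul_one]
  apply IntermediateField.eq_of_le_of_finrank_eq le_top
  rw [hfr]
  exact (IntermediateField.topEquiv (F := ℚ) (E := M)).toLinearEquiv.finrank_eq.symm
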